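/- Let E be an AL-space, h ∈ E₊ with ‖h‖ = 1, and (f_j)_{j∈J} a net in E₊ of vectors of norm 1 such that ‖(f_j − h)⁻‖ → 0. Then f_j → h in norm. -/

import Mathlib

open Filter Topology

/-- Let `E` be an AL-space (a Banach lattice whose norm is additive on the positive
cone), `h ∈ E₊` with `‖h‖ = 1`, and `(f_j)` a net of positive vectors of norm `1` such
that `‖(f_j - h)⁻‖ → 0`.  Then `f_j → h` in norm. -/
theorem tendsto_of_negPart_tendsto_zero
    {E : Type*} [NormedAddCommGroup E] [Lattice E] [HasSolidNorm E]
    [IsOrderedAddMonoid E] [NormedSpace ℝ E] [CompleteSpace E]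
    (hAL : ∀ f g : E, 0 ≤ f → 0 ≤ g → ‖f + g‖ = ‖f‖ + ‖g‖)
    (h : E) (hh : 0 ≤ h) (hnorm : ‖h‖ = 1)
    {ι : Type*} (l : Filter ι) [l.NeBot] (f : ι → E)
    (hfpos : ∀ j, 0 ≤ f j) (hfnorm : ∀ j, ‖f j‖ = 1)
    (hlb : Tendsto (fun j => ‖(f j - h)⁻‖) l (𝓝 0)) :
    Tendsto f l (𝓝 h) := by
  rw [tendsto_iff_norm_sub_tendsto_zero]
  have key : ∀ j, ‖f j - h‖ ≤ 2 * ‖(f j - h)⁻‖ := by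
    intro j
    have e := posPart_sub_negPart (f j - h)
    have h1 : (f j - h)⁺ + h = f j + (f j - h)⁻ := by
      have : (f j - h)⁺ - (f j - h)⁻ - (f j - h) = 0 := by rw [e]; abel
      have : (f j - h)⁺ + h - (f j + (f j - h)⁻) = 0 := by
        rw [← this]; abel
      exact sub_eq_zero.mp this
    have n1 : ‖(f j - h)⁺ + h‖ = ‖(f j - h)⁺‖ + ‖h‖ :=
      hAL _ _ (posPart_nonneg _) hh
    have n2 : ‖f j + (f j - h)⁻‖ = ‖f j‖ + ‖(f j - h)⁻‖ :=
      hAL _ _ (hfpos j) (negPart_nonneg _)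
    have heq : ‖(f j - h)⁺‖ = ‖(f j - h)⁻‖ := by
      rw [h1, n2] at n1
      rw [hnorm, hfnorm j] at n1
      linarith
    calc ‖f j - h‖ = ‖(f j - h)⁺ - (f j - h)⁻‖ := by rw [e]
      _ ≤ ‖(f j - h)⁺‖ + ‖(f j - h)⁻‖ := norm_sub_le _ _
      _ = 2 * ‖(f j - h)⁻‖ := by rw [heq]; ring
  have h2 : Tendsto (fun j => 2 * ‖(f j - h)⁻‖) l (𝓝 0) := by
    simpa using hlb.const_mul 2
  exact squeeze_zero (fun j => norm_nonneg _) key h2
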